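/- Let M be a symmetric positive semidefinite d×d matrix with top eigenvalue λ₁, and g(x) = (1/2)‖M − xxᵀ‖_F². If x satisfies ∇g(x) = 0 and ∇²g(x) ⪰ 0 (the Hessian 2xxᵀ − M + ‖x‖₂² I is positive semidefinite), then ‖x‖₂² = λ₁, i.e., x is a top eigenvector of M (or λ₁ = 0 and x = 0). Consequently x is a global minimizer of g. -/

import Mathlib

open Matrix Finset

/-- M symmetric PSD with top eigenvalue λ₁, g(x) = (1/2)‖M − xxᵀ‖_F².
If ∇g(x) = 0 and the Hessian 2xxᵀ − M + ‖x‖₂² I is PSD, then ‖x‖₂² = λ₁ and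
x is a global minimizer of g. -/
theorem stmt1 {d : ℕ} (M : Matrix (Fin d) (Fin d) ℝ)
    (hSymm : M.IsSymm) (hPSD : M.PosSemidef)
    (lam1 : ℝ)
    (htop : ∀ v : Fin d → ℝ, v ⬝ᵥ M.mulVec v ≤ lam1 * (v ⬝ᵥ v))
    (heig : ∃ v : Fin d → ℝ, v ≠ 0 ∧ M.mulVec v = lam1 • v)
    (x : Fin d → ℝ)
    (hstat : (∑ i, x i ^ 2) • x - M.mulVec x = 0)
    (hHess : ((2 : ℝ) • vecMulVec x x - M + (∑ i, x i ^ 2) • (1 : Matrix (Fin d) (Fin d) ℝ)).PosSemidef) :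
    (∑ i, x i ^ 2) = lam1 ∧
      ∀ y : Fin d → ℝ,
        (1 / 2 : ℝ) * ∑ i, ∑ j, (M i j - x i * x j) ^ 2 ≤
          (1 / 2 : ℝ) * ∑ i, ∑ j, (M i j - y i * y j) ^ 2 := by
  set s : ℝ := ∑ i, x i ^ 2 with hs
  have hMx : M.mulVec x = s • x := by
    have := sub_eq_zero.mp hstat
    exact this.symm
  -- quadratic form of Hessian
  have hquad : ∀ v : Fin d → ℝ,
      0 ≤ 2 * (x ⬝ᵥ v) ^ 2 - v ⬝ᵥ M.mulVec v + s * (v ⬝ᵥ v) := by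
    intro v
    have h := hHess.dotProduct_mulVec_nonneg v
    simp only [star_trivial] at h
    have hv : (((2 : ℝ) • vecMulVec x x - M + s • (1 : Matrix (Fin d) (Fin d) ℝ)) *ᵥ v)
        = (2 * (x ⬝ᵥ v)) • x - M *ᵥ v + s • v := by
      rw [Matrix.add_mulVec, Matrix.sub_mulVec, Matrix.smul_mulVec,
        Matrix.smul_mulVec, Matrix.one_mulVec]
      congr 1
      congr 1
      ext i
      simp [vecMulVec, Matrix.mulVec, dotProduct, Finset.mul_sum]
      ring_nf
      rw [Finset.mul_sum]
      congr 1; ext j; ring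
    rw [hv] at h
    have : v ⬝ᵥ ((2 * (x ⬝ᵥ v)) • x - M *ᵥ v + s • v)
        = 2 * (x ⬝ᵥ v) ^ 2 - v ⬝ᵥ M.mulVec v + s * (v ⬝ᵥ v) := by
      rw [dotProduct_add, dotProduct_sub, dotProduct_smul, dotProduct_smul]
      rw [dotProduct_comm v x]
      simp only [smul_eq_mul]
      ring
    rw [this] at h
    exact h
  have hxx : x ⬝ᵥ x = s := by simp [dotProduct, hs, sq]
  have hs0 : 0 ≤ s := Finset.sum_nonneg fun i _ => sq_nonneg _
  -- s ≤ lam1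
  have hxMx : x ⬝ᵥ M.mulVec x = s * s := by rw [hMx, dotProduct_smul, hxx, smul_eq_mul]
  obtain ⟨v, hv0, hMv⟩ := heig
  have hvvnn : 0 ≤ v ⬝ᵥ v := Finset.sum_nonneg fun i _ => mul_self_nonneg _
  have hvv : 0 < v ⬝ᵥ v := by
    rcases hvvnn.lt_or_eq with h | h
    · exact h
    · exact absurd ((dotProduct_self_eq_zero (v := v)).mp h.symm) hv0
  have hlam0 : 0 ≤ lam1 := by
    have := hPSD.dotProduct_mulVec_nonneg v
    simp only [star_trivial] at this
    rw [hMv, dotProduct_smul, smul_eq_mul] at this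
    nlinarith
  have hsle : s ≤ lam1 := by
    have := htop x
    rw [hxMx, hxx] at this
    rcases hs0.lt_or_eq with h | h
    · nlinarith
    · linarith
  -- (s - lam1) * (x ⬝ᵥ v) = 0
  have hkey : (s - lam1) * (x ⬝ᵥ v) = 0 := by
    have h1 : x ⬝ᵥ M.mulVec v = lam1 * (x ⬝ᵥ v) := by rw [hMv, dotProduct_smul, smul_eq_mul]
    have h2 : x ⬝ᵥ M.mulVec v = s * (x ⬝ᵥ v) := by
      rw [dotProduct_mulVec, ← Matrix.mulVec_transpose, hSymm.eq, hMx, smul_dotProduct,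
        smul_eq_mul]
    nlinarith [h1, h2]
  have hseq : s = lam1 := by
    rcases mul_eq_zero.mp hkey with h | h
    · linarith [sub_eq_zero.mp h]
    · -- x ⬝ᵥ v = 0, use Hessian at v
      have hq := hquad v
      rw [h] at hq
      have hMvv : v ⬝ᵥ M.mulVec v = lam1 * (v ⬝ᵥ v) := by
        rw [hMv, dotProduct_smul, smul_eq_mul]
      rw [hMvv] at hq
      nlinarith
  refine ⟨hseq, ?_⟩
  -- expansion lemma
  have expand : ∀ y : Fin d → ℝ, ∑ i, ∑ j, (M i j - y i * y j) ^ 2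
      = (∑ i, ∑ j, (M i j) ^ 2) - 2 * (y ⬝ᵥ M.mulVec y) + (∑ i, y i ^ 2) ^ 2 := by
    intro y
    have e1 : y ⬝ᵥ M.mulVec y = ∑ i, ∑ j, y i * (M i j * y j) := by
      simp [dotProduct, Matrix.mulVec, Finset.mul_sum]
    have e2 : (∑ i, y i ^ 2) ^ 2 = ∑ i, ∑ j, y i ^ 2 * y j ^ 2 := by
      rw [sq, Finset.sum_mul_sum]
    rw [e1, e2, Finset.mul_sum, ← Finset.sum_sub_distrib, ← Finset.sum_add_distrib]
    apply Finset.sum_congr rfl; intro i _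
    rw [Finset.mul_sum, ← Finset.sum_sub_distrib, ← Finset.sum_add_distrib]
    apply Finset.sum_congr rfl; intro j _
    ring
  intro y
  rw [expand x, expand y, hxMx, hseq]
  have hy := htop y
  have hyy : y ⬝ᵥ y = ∑ i, y i ^ 2 := by simp [dotProduct, sq]
  rw [hyy] at hy
  nlinarith [sq_nonneg ((∑ i, y i ^ 2) - lam1), hy]
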